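/- Suppose 0 ∈ Ω and that ∇x is the unique solution of min ‖w‖_1 subject to A_n w = A_n(∇x). Then x is the unique solution of min ‖∇z‖_1 subject to A_n z = A_n x. -/

import Mathlib

/-- The unitary one-dimensional discrete Fourier transform on `ℂ^n`. -/
noncomputable def dft (n : ℕ) (z : Fin n → ℂ) : Fin n → ℂ :=
  fun k => (1 / (Real.sqrt n : ℂ)) * ∑ j : Fin n, z j *
    Complex.exp (-2 * (Real.pi : ℂ) * Complex.I * ((k : ℕ) : ℂ) * ((j : ℕ) : ℂ) / (n : ℂ))

/-- The periodic finite difference operator `(∇z)_j = z_j - z_{(j-1) mod n}`. -/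
def fdiff (n : ℕ) [NeZero n] (z : Fin n → ℂ) : Fin n → ℂ := fun j => z j - z (j - 1)

lemma exp_pow (n : ℕ) [NeZero n] (k j : Fin n) :
    Complex.exp (-2 * (Real.pi : ℂ) * Complex.I * ((k : ℕ) : ℂ) * ((j : ℕ) : ℂ) / (n : ℂ)) =
      Complex.exp (-2 * (Real.pi : ℂ) * Complex.I * ((k : ℕ) : ℂ) / (n : ℂ)) ^ (j : ℕ) := by
  rw [← Complex.exp_nat_mul]
  congr 1
  ring

lemma q_pow_n (n : ℕ) [NeZero n] (k : Fin n) :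
    Complex.exp (-2 * (Real.pi : ℂ) * Complex.I * ((k : ℕ) : ℂ) / (n : ℂ)) ^ n = 1 := by
  rw [← Complex.exp_nat_mul]
  have hn : (n : ℂ) ≠ 0 := Nat.cast_ne_zero.mpr (NeZero.ne n)
  have : (n : ℂ) * (-2 * (Real.pi : ℂ) * Complex.I * ((k : ℕ) : ℂ) / (n : ℂ)) =
      (-(k : ℕ) : ℤ) * (2 * Real.pi * Complex.I) := by
    push_cast
    field_simp
  rw [this, Complex.exp_int_mul_two_pi_mul_I]

lemma q_pow_mod (n : ℕ) [NeZero n] (k : Fin n) (m : ℕ) :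
    Complex.exp (-2 * (Real.pi : ℂ) * Complex.I * ((k : ℕ) : ℂ) / (n : ℂ)) ^ (m % n) =
      Complex.exp (-2 * (Real.pi : ℂ) * Complex.I * ((k : ℕ) : ℂ) / (n : ℂ)) ^ m := by
  conv_rhs => rw [← Nat.mod_add_div m n]
  rw [pow_add, pow_mul, q_pow_n, one_pow, mul_one]

lemma dft_fdiff (n : ℕ) [NeZero n] (z : Fin n → ℂ) (k : Fin n) :
    dft n (fdiff n z) k =
      (1 - Complex.exp (-2 * (Real.pi : ℂ) * Complex.I * ((k : ℕ) : ℂ) / (n : ℂ))) *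
        dft n z k := by
  unfold dft fdiff
  set q := Complex.exp (-2 * (Real.pi : ℂ) * Complex.I * ((k : ℕ) : ℂ) / (n : ℂ)) with hq
  have he : ∀ j : Fin n,
      Complex.exp (-2 * (Real.pi : ℂ) * Complex.I * ((k : ℕ) : ℂ) * ((j : ℕ) : ℂ) / (n : ℂ)) =
        q ^ (j : ℕ) := fun j => exp_pow n k j
  simp only [he]
  have hshift : ∑ j : Fin n, z (j - 1) * q ^ (j : ℕ) =
      q * ∑ j : Fin n, z j * q ^ (j : ℕ) := by
    rw [Finset.mul_sum]
    refine (Fintype.sum_equiv (Equiv.addRight (1 : Fin n)) _ _ fun i => ?_).symm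
    simp only [Equiv.coe_addRight]
    rw [add_sub_cancel_right]
    have hval : ((i + 1 : Fin n) : ℕ) = ((i : ℕ) + ((1 : Fin n) : ℕ)) % n := Fin.val_add i 1
    rw [hval, q_pow_mod, pow_add]
    have h1 : q ^ ((1 : Fin n) : ℕ) = q := by
      have : ((1 : Fin n) : ℕ) = 1 % n := Fin.val_one' n
      rw [this, q_pow_mod, pow_one]
    rw [h1]
    ring
  have hsplit : ∑ j : Fin n, (z j - z (j - 1)) * q ^ (j : ℕ) =
      (∑ j : Fin n, z j * q ^ (j : ℕ)) - ∑ j : Fin n, z (j - 1) * q ^ (j : ℕ) := by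
    rw [← Finset.sum_sub_distrib]
    exact Finset.sum_congr rfl fun j _ => by ring
  rw [hsplit, hshift]
  ring

open Fin.NatCast in
lemma const_of_shift (n : ℕ) [NeZero n] (d : Fin n → ℂ) (h : ∀ j, d j = d (j - 1)) :
    ∀ i : Fin n, d i = d 0 := by
  have key : ∀ m : ℕ, ∀ i : Fin n, d i = d (i - (m : Fin n)) := by
    intro m
    induction m with
    | zero => simp
    | succ m ih =>
      intro i
      rw [ih i, h (i - (m : Fin n))]
      congr 1
      push_cast
      rw [sub_sub]
  intro i
  have := key (i : ℕ) i
  rwa [Fin.cast_val_eq_self, sub_self] at this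

/-- If `∇x` is the unique `ℓ¹`-minimizer subject to `A w = A (∇x)`, and `0 ∈ Ω`, then `x` is
the unique minimizer of `‖∇z‖₁` subject to `A z = A x` (reduction argument for Theorem 2). -/
theorem stmt12 (n : ℕ) [NeZero n] (hn : 2 ≤ n) (Ω : Finset (Fin n)) (h0 : (0 : Fin n) ∈ Ω)
    (x : Fin n → ℂ)
    (hx : (∀ k ∈ Ω, dft n (fdiff n x) k = dft n (fdiff n x) k) ∧
      ∀ w : Fin n → ℂ, (∀ k ∈ Ω, dft n w k = dft n (fdiff n x) k) →
        ((∑ j : Fin n, ‖fdiff n x j‖) ≤ ∑ j : Fin n, ‖w j‖ ∧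
          ((∑ j : Fin n, ‖w j‖) ≤ ∑ j : Fin n, ‖fdiff n x j‖ → w = fdiff n x))) :
    ∀ z : Fin n → ℂ, (∀ k ∈ Ω, dft n z k = dft n x k) →
      ((∑ j : Fin n, ‖fdiff n x j‖) ≤ ∑ j : Fin n, ‖fdiff n z j‖ ∧
        ((∑ j : Fin n, ‖fdiff n z j‖) ≤ ∑ j : Fin n, ‖fdiff n x j‖ → z = x)) := by
  intro z hz
  have hw : ∀ k ∈ Ω, dft n (fdiff n z) k = dft n (fdiff n x) k := by
    intro k hk
    rw [dft_fdiff, dft_fdiff, hz k hk]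
  obtain ⟨h1, h2⟩ := hx.2 (fdiff n z) hw
  refine ⟨h1, fun hle => ?_⟩
  have hfz : fdiff n z = fdiff n x := h2 hle
  have hc : (1 / (Real.sqrt n : ℂ)) ≠ 0 := by
    have hn0 : (0 : ℝ) < n := Nat.cast_pos.mpr (Nat.pos_of_ne_zero (NeZero.ne n))
    have : Real.sqrt n ≠ 0 := ne_of_gt (Real.sqrt_pos.mpr hn0)
    simp [this]
  have hsum : ∑ j : Fin n, z j = ∑ j : Fin n, x j := by
    have h0' := hz 0 h0
    unfold dft at h0'
    simp only [Fin.val_zero, Nat.cast_zero, mul_zero, zero_mul, zero_div, Complex.exp_zero,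
      mul_one] at h0'
    exact mul_left_cancel₀ hc h0'
  set d : Fin n → ℂ := fun j => z j - x j with hd
  have hshift : ∀ j, d j = d (j - 1) := by
    intro j
    have := congrFun hfz j
    simp only [fdiff, hd] at this ⊢
    linear_combination this
  have hconst := const_of_shift n d hshift
  have hsumd : ∑ j : Fin n, d j = 0 := by
    simp only [hd]
    rw [Finset.sum_sub_distrib, hsum, sub_self]
  have hd0 : d 0 = 0 := by
    have hx0 : ∑ j : Fin n, d j = (n : ℂ) * d 0 := by
      rw [Finset.sum_congr rfl fun j _ => hconst j]
      simp [Finset.card_univ, mul_comm]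
    rw [hx0] at hsumd
    have hn0 : (n : ℂ) ≠ 0 := Nat.cast_ne_zero.mpr (NeZero.ne n)
    exact (mul_eq_zero.mp hsumd).resolve_left hn0
  funext j
  have hj := hconst j
  rw [hd0] at hj
  have hzx : z j - x j = 0 := hj
  exact sub_eq_zero.mp hzx
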